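/- Under Assumptions A, for every h ∈ H the map T(u) = u − Q(F(u) − h) is a q-contraction on the closed ball B(y, R): for all u, v ∈ B(y, R), ‖T(u) − T(v)‖ ≤ q‖u − v‖. -/
import Mathlib


open Metric Set Filter

theorem stmt_3
    {H : Type*} [NormedAddCommGroup H] [InnerProductSpace ℝ H] [CompleteSpace H]
    (F : H → H) (F' : H → H →L[ℝ] H) (y f : H) (R m q : ℝ)
    (hf : F y = f) (hR : 0 < R)
    (hdiff : ∀ u ∈ closedBall y R, HasFDerivAt F (F' u) u)
    (Q : H →L[ℝ] H)
    (hQl : Q.comp (F' y) = ContinuousLinearMap.id ℝ H)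
    (hQr : (F' y).comp Q = ContinuousLinearMap.id ℝ H)
    (hm : 0 < m) (hQm : ‖Q‖ ≤ m)
    (ω : ℝ → ℝ)
    (hωcont : ContinuousOn ω (Icc 0 (2 * R)))
    (hωmono : StrictMonoOn ω (Icc 0 (2 * R)))
    (hω0 : ω 0 = 0)
    (hωF : ∀ u ∈ closedBall y R, ∀ v ∈ closedBall y R, ‖F' u - F' v‖ ≤ ω ‖u - v‖)
    (hq : m * ω R = q) (hq0 : 0 < q) (hq1 : q < 1)
 :
    ∀ (h : H), ∀ u ∈ closedBall y R, ∀ v ∈ closedBall y R,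
      ‖(u - Q (F u - h)) - (v - Q (F v - h))‖ ≤ q * ‖u - v‖ := by
  intro h u hu v hv
  have hyy : y ∈ closedBall y R := mem_closedBall_self hR.le
  -- bound on derivative difference on the ball
  have bound : ∀ x ∈ closedBall y R, ‖F' x - F' y‖ ≤ ω R := by
    intro x hx
    refine (hωF x hx y hyy).trans ?_
    have hxy : ‖x - y‖ ≤ R := by
      rw [← dist_eq_norm]; exact mem_closedBall.mp hx
    have h1 : ‖x - y‖ ∈ Icc (0:ℝ) (2 * R) := ⟨norm_nonneg _, hxy.trans (by linarith)⟩
    have h2 : R ∈ Icc (0:ℝ) (2 * R) := ⟨hR.le, by linarith⟩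
    rcases eq_or_lt_of_le hxy with heq | hlt
    · rw [heq]
    · exact (hωmono h1 h2 hlt).le
  have key : ‖F u - F v - (F' y) (u - v)‖ ≤ ω R * ‖u - v‖ := by
    have := (convex_closedBall y R).norm_image_sub_le_of_norm_hasFDerivWithin_le'
      (f := F) (f' := F') (φ := F' y) (C := ω R)
      (fun x hx => (hdiff x hx).hasFDerivWithinAt) bound hv hu
    simpa using this
  -- rewrite T u - T v as Q applied to something
  have hrw : (u - Q (F u - h)) - (v - Q (F v - h))
      = Q ((F' y) (u - v) - (F u - F v)) := by
    have hid : Q ((F' y) (u - v)) = u - v := by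
      have := congrArg (fun (L : H →L[ℝ] H) => L (u - v)) hQl
      simpa using this
    conv_rhs => rw [map_sub, hid]
    simp only [map_sub]
    abel
  rw [hrw]
  calc ‖Q ((F' y) (u - v) - (F u - F v))‖
      ≤ ‖Q‖ * ‖(F' y) (u - v) - (F u - F v)‖ := Q.le_opNorm _
    _ ≤ m * (ω R * ‖u - v‖) := by
        refine mul_le_mul hQm ?_ (norm_nonneg _) hm.le
        have : ‖(F' y) (u - v) - (F u - F v)‖ = ‖F u - F v - (F' y) (u - v)‖ := by
          rw [← norm_neg]; congr 1; abel
        rw [this]; exact key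
    _ = q * ‖u - v‖ := by rw [← hq]; ring
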